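/- arXiv:2304.14392 — 2 statements merged into one kernel-verified Lean document; each statement's English description precedes it below -/
import Mathlib

section
/- Let Φ0 ∈ ℝ^{n+1} be a phase list and let P0 be the complex polynomial such that the top-left entry of U_{Φ0}(x) equals P0(x) for all x ∈ [-1,1]. If there exists x* ∈ [-1,1] with P0(x*) not real, then there exist an antisymmetric phase list Φ1 (with P1 the real polynomial equal to both diagonal entries of U_{Φ1}) and a point x ∈ [-1,1] such that the top-left entry of the nested QSP unitary (Φ1 ∘ Φ0)(x) is not equal to P1(P0(x)). In particular, antisymmetry (realness of the embedded polynomial) is necessary for nesting of QSP protocols to compose their embedded polynomial transforms at all arguments. -/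
open Matrix Polynomial

/-- The single-qubit Z-rotation `Z(φ) = diag(e^{iφ}, e^{-iφ})`. -/
noncomputable def Zrot (φ : ℝ) : Matrix (Fin 2) (Fin 2) ℂ :=
  !![Complex.exp (Complex.I * (φ : ℂ)), 0; 0, Complex.exp (-(Complex.I * (φ : ℂ)))]

/-- The QSP signal oracle `W(x)`, with diagonal entries `x` and off-diagonal
entries `i·√(1-x²)`. -/
noncomputable def Wosc (x : ℝ) : Matrix (Fin 2) (Fin 2) ℂ :=
  !![(x : ℂ), Complex.I * (Real.sqrt (1 - x ^ 2) : ℂ);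
     Complex.I * (Real.sqrt (1 - x ^ 2) : ℂ), (x : ℂ)]

/-- The QSP unitary `U_Φ(x) = Z(φ₀)·W(x)·Z(φ₁)·W(x)·Z(φ₂)⋯W(x)·Z(φ_d)`. -/
noncomputable def qspU {d : ℕ} (Φ : Fin (d + 1) → ℝ) (x : ℝ) :
    Matrix (Fin 2) (Fin 2) ℂ :=
  Zrot (Φ 0) * (List.ofFn fun k : Fin d => Wosc x * Zrot (Φ k.succ)).prod

/-- The nested QSP unitary `(Φ1 ∘ Φ0)(x)`: the QSP circuit of `Φ1` with each
oracle `W(x)` replaced by `U_{Φ0}(x)`. -/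
noncomputable def nestedU {n m : ℕ} (Φ1 : Fin (m + 1) → ℝ) (Φ0 : Fin (n + 1) → ℝ)
    (x : ℝ) : Matrix (Fin 2) (Fin 2) ℂ :=
  Zrot (Φ1 0) * (List.ofFn fun k : Fin m => qspU Φ0 x * Zrot (Φ1 k.succ)).prod

/-- A phase list `Φ = (φ_0, …, φ_d)` is antisymmetric if `φ_k = -φ_{d-k}` for all `k`. -/
def Antisym {d : ℕ} (Φ : Fin (d + 1) → ℝ) : Prop := ∀ k, Φ (Fin.rev k) = -Φ k

/-- A polynomial has parity `m mod 2` if only monomials of degree congruent to `m`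
modulo 2 have nonzero coefficients. -/
def HasParity {R : Type*} [Semiring R] (m : ℕ) (P : Polynomial R) : Prop :=
  ∀ k, k % 2 ≠ m % 2 → P.coeff k = 0

lemma sqrt_sq_c {x : ℝ} (hx : x ∈ Set.Icc (-1:ℝ) 1) :
    ((Real.sqrt (1 - x ^ 2) : ℝ) : ℂ) ^ 2 = 1 - (x:ℂ)^2 := by
  have h1 : (0:ℝ) ≤ 1 - x ^ 2 := by nlinarith [hx.1, hx.2]
  rw [← Complex.ofReal_pow, Real.sq_sqrt h1]; push_cast; ring

lemma Zrot_zero : Zrot 0 = 1 := by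
  simp [Zrot, Matrix.one_fin_two]

lemma Zrot_mem (φ : ℝ) : Zrot φ ∈ unitary (Matrix (Fin 2) (Fin 2) ℂ) := by
  constructor <;>
  · ext i j
    fin_cases i <;> fin_cases j <;>
      simp [Zrot, Matrix.mul_apply, Fin.sum_univ_two, Matrix.star_eq_conjTranspose,
        Matrix.conjTranspose_apply, ← Complex.exp_conj, ← Complex.exp_add,
        Matrix.one_apply, Complex.conj_I]

lemma Wosc_mem {x : ℝ} (hx : x ∈ Set.Icc (-1:ℝ) 1) :
    Wosc x ∈ unitary (Matrix (Fin 2) (Fin 2) ℂ) := by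
  have hs := sqrt_sq_c hx
  constructor <;>
  · ext i j
    fin_cases i <;> fin_cases j <;>
      simp [Wosc, Matrix.mul_apply, Fin.sum_univ_two, Matrix.star_eq_conjTranspose,
        Matrix.conjTranspose_apply, Matrix.one_apply, Complex.conj_I,
        Complex.conj_ofReal] <;>
      first
        | ring1
        | linear_combination hs - ((Real.sqrt (1 - x ^ 2) : ℝ) : ℂ) ^ 2 * Complex.I_sq

lemma det_Zrot (φ : ℝ) : (Zrot φ).det = 1 := by
  simp [Zrot, Matrix.det_fin_two_of, ← Complex.exp_add]

lemma det_Wosc {x : ℝ} (hx : x ∈ Set.Icc (-1:ℝ) 1) : (Wosc x).det = 1 := by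
  have hs := sqrt_sq_c hx
  simp only [Wosc, Matrix.det_fin_two_of]
  linear_combination hs - ((Real.sqrt (1 - x ^ 2) : ℝ) : ℂ) ^ 2 * Complex.I_sq

lemma qspU_mem {n : ℕ} (Φ : Fin (n + 1) → ℝ) {x : ℝ} (hx : x ∈ Set.Icc (-1:ℝ) 1) :
    qspU Φ x ∈ unitary (Matrix (Fin 2) (Fin 2) ℂ) := by
  refine mul_mem (Zrot_mem _) (Submonoid.list_prod_mem _ ?_)
  intro a ha
  obtain ⟨k, rfl⟩ := List.mem_ofFn.mp ha
  exact mul_mem (Wosc_mem hx) (Zrot_mem _)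

lemma det_qspU {n : ℕ} (Φ : Fin (n + 1) → ℝ) {x : ℝ} (hx : x ∈ Set.Icc (-1:ℝ) 1) :
    (qspU Φ x).det = 1 := by
  rw [qspU, Matrix.det_mul, det_Zrot, one_mul]
  have : ((List.ofFn fun k : Fin n => Wosc x * Zrot (Φ k.succ)).prod).det
      = ((List.ofFn fun k : Fin n => Wosc x * Zrot (Φ k.succ)).map Matrix.det).prod := by
    simpa [Matrix.coe_detMonoidHom] using
      map_list_prod (Matrix.detMonoidHom)
        (List.ofFn fun k : Fin n => Wosc x * Zrot (Φ k.succ))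
  rw [this]
  apply List.prod_eq_one
  intro a ha
  rw [List.map_ofFn] at ha
  obtain ⟨k, rfl⟩ := List.mem_ofFn.mp ha
  simp [Matrix.det_mul, det_Zrot, det_Wosc hx]

/-- From unitarity and `det = 1`: the (1,1) entry is the conjugate of the (0,0) entry. -/
lemma conj_entry {U : Matrix (Fin 2) (Fin 2) ℂ}
    (hU : U ∈ unitary (Matrix (Fin 2) (Fin 2) ℂ)) (hdet : U.det = 1) :
    U 1 1 = starRingEnd ℂ (U 0 0) := by
  have hinv : U⁻¹ = star U := Matrix.inv_eq_right_inv hU.2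
  have hadj : U⁻¹ = U.adjugate := by
    rw [Matrix.inv_def, hdet]; simp
  have := hinv.symm.trans hadj
  have h00 := congrFun (congrFun this 0) 0
  simpa [Matrix.star_eq_conjTranspose, Matrix.conjTranspose_apply, Matrix.adjugate_fin_two]
    using h00.symm

/-- If the polynomial embedded by `Φ0` is not real somewhere on
`[-1,1]`, then nesting fails to compose polynomials for some antisymmetric
outer protocol at some argument: antisymmetry (realness) of the inner protocol


is necessary for semantic embedding at all arguments. -/
theorem nonreal_inner_protocol_fails_to_compose (n : ℕ) (Φ0 : Fin (n + 1) → ℝ)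
    (P0 : Polynomial ℂ)
    (hP0 : ∀ x ∈ Set.Icc (-1 : ℝ) 1, (qspU Φ0 x) 0 0 = P0.eval (x : ℂ))
    (hnonreal : ∃ x ∈ Set.Icc (-1 : ℝ) 1, (P0.eval (x : ℂ)).im ≠ 0) :
    ∃ (m : ℕ) (Φ1 : Fin (m + 1) → ℝ) (P1 : Polynomial ℝ),
      Antisym Φ1 ∧
      (∀ x ∈ Set.Icc (-1 : ℝ) 1,
        (qspU Φ1 x) 0 0 = ((P1.eval x : ℝ) : ℂ) ∧
        (qspU Φ1 x) 1 1 = ((P1.eval x : ℝ) : ℂ)) ∧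
      ∃ x ∈ Set.Icc (-1 : ℝ) 1,
        (nestedU Φ1 Φ0 x) 0 0 ≠ Polynomial.aeval (P0.eval (x : ℂ)) P1 := by
  obtain ⟨x0, hx0, him⟩ := hnonreal
  refine ⟨2, fun _ => 0, Polynomial.C 2 * Polynomial.X ^ 2 - 1, ?_, ?_, ?_⟩
  · intro k; simp [Antisym]
  · intro x hx
    have hs := sqrt_sq_c hx
    have hq : qspU (fun _ : Fin 3 => (0:ℝ)) x = Wosc x * Wosc x := by
      simp [qspU, Zrot_zero, List.ofFn_succ]
    rw [hq]
    constructor <;>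
    · simp [Matrix.mul_apply, Fin.sum_univ_two, Wosc]
      push_cast
      linear_combination (-1 : ℂ) * hs + ((Real.sqrt (1 - x ^ 2) : ℝ) : ℂ) ^ 2 * Complex.I_sq
  · refine ⟨x0, hx0, ?_⟩
    set U := qspU Φ0 x0 with hUdef
    have hU := qspU_mem Φ0 hx0
    have hdet := det_qspU Φ0 hx0
    have hconj : U 1 1 = starRingEnd ℂ (U 0 0) := conj_entry hU hdet
    have hdet2 : U 0 0 * U 1 1 - U 0 1 * U 1 0 = 1 := by
      rw [← Matrix.det_fin_two]; exact hdet
    have ha : U 0 0 = P0.eval (x0 : ℂ) := hP0 x0 hx0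
    have hne : nestedU (fun _ : Fin 3 => (0:ℝ)) Φ0 x0 = U * U := by
      simp [nestedU, Zrot_zero, hUdef]
    rw [hne]
    have haeval : Polynomial.aeval (P0.eval (x0 : ℂ))
        (Polynomial.C 2 * Polynomial.X ^ 2 - 1 : Polynomial ℝ)
        = 2 * (P0.eval (x0 : ℂ)) ^ 2 - 1 := by
      simp [Polynomial.aeval_def]
    rw [haeval]
    have hmul : (U * U) 0 0 = U 0 0 * U 0 0 + U 0 1 * U 1 0 := by
      simp [Matrix.mul_apply, Fin.sum_univ_two]
    rw [hmul]
    intro h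
    set a := P0.eval (x0 : ℂ)
    have ha0 : a ≠ 0 := fun h0 => him (by simp [h0])
    have key : a * starRingEnd ℂ a = a * a := by
      have hbc : U 0 1 * U 1 0 = a * starRingEnd ℂ a - 1 := by
        rw [← ha, ← hconj]; linear_combination -hdet2
      rw [ha, hbc] at h
      linear_combination h
    have : starRingEnd ℂ a = a := mul_left_cancel₀ ha0 key
    exact him (by simpa [Complex.conj_eq_iff_im] using this)
end

section
/- Let d ≥ 1 and let P and Q be complex polynomials with deg P ≤ d, deg Q ≤ d−1, P of parity d mod 2, Q of parity (d−1) mod 2, and |P(x)|² + (1−x²)·|Q(x)|² = 1 for all x ∈ [-1,1]. Then there exists a phase list Φ = (φ_0, …, φ_d) ∈ ℝ^{d+1} such that for all x ∈ [-1,1], U_Φ(x) equals the 2×2 matrix with top-left entry P(x), top-right entry i√(1−x²)·Q(x), bottom-left entry i√(1−x²)·conj(Q(x)), and bottom-right entry conj(P(x)). -/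
open Matrix Polynomial

/-! ### Auxiliary lemmas -/

lemma qspU_snoc {d : ℕ} (Φ : Fin (d + 1) → ℝ) (φ : ℝ) (x : ℝ) :
    qspU (Fin.snoc Φ φ) x = qspU Φ x * (Wosc x * Zrot φ) := by
  unfold qspU
  rw [List.ofFn_succ']
  simp only [List.concat_eq_append, List.prod_append, List.prod_cons, List.prod_nil,
    Fin.succ_last, Fin.snoc_last, mul_one]
  have h0 : (Fin.snoc Φ φ : Fin (d+2) → ℝ) 0 = Φ 0 := by
    rw [← Fin.castSucc_zero, Fin.snoc_castSucc]
  have h1 : ∀ i : Fin d, (Fin.snoc Φ φ : Fin (d+2) → ℝ) (Fin.castSucc i).succ = Φ i.succ := by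
    intro i
    rw [Fin.succ_castSucc, Fin.snoc_castSucc]
  simp only [h0, h1, mul_assoc]

lemma eval_map_conj (P : Polynomial ℂ) (z : ℂ) :
    (P.map (starRingEnd ℂ)).eval z = (starRingEnd ℂ) (P.eval ((starRingEnd ℂ) z)) := by
  induction P using Polynomial.induction_on' with
  | add p q hp hq => simp [hp, hq]
  | monomial n a => simp [Polynomial.eval_monomial]

lemma sqrt_sq_cast {x : ℝ} (hx : x ∈ Set.Icc (-1 : ℝ) 1) :
    ((Real.sqrt (1 - x ^ 2) : ℝ) : ℂ) ^ 2 = 1 - (x : ℂ) ^ 2 := by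
  obtain ⟨h1, h2⟩ := hx
  have : (0:ℝ) ≤ 1 - x ^ 2 := by nlinarith
  rw [← Complex.ofReal_pow, Real.sq_sqrt this]
  push_cast; ring

lemma poly_norm_identity (P Q : Polynomial ℂ)
    (hnorm : ∀ x ∈ Set.Icc (-1 : ℝ) 1,
      Complex.normSq (P.eval (x : ℂ)) +
        (1 - x ^ 2) * Complex.normSq (Q.eval (x : ℂ)) = 1) :
    P * P.map (starRingEnd ℂ) + (1 - Polynomial.X ^ 2) * (Q * Q.map (starRingEnd ℂ)) = 1 := by
  set R : Polynomial ℂ :=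
    P * P.map (starRingEnd ℂ) + (1 - Polynomial.X ^ 2) * (Q * Q.map (starRingEnd ℂ)) - 1 with hR
  have hroot : ∀ x ∈ Set.Icc (-1 : ℝ) 1, R.IsRoot (x : ℂ) := by
    intro x hx
    have h := hnorm x hx
    have hc : (Complex.normSq (P.eval (x : ℂ)) : ℂ) +
        (1 - (x:ℂ) ^ 2) * (Complex.normSq (Q.eval (x : ℂ)) : ℂ) = 1 := by
      have := congrArg (fun r : ℝ => (r : ℂ)) h
      push_cast at this ⊢
      linear_combination this
    simp only [Polynomial.IsRoot, hR, Polynomial.eval_sub, Polynomial.eval_add,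
      Polynomial.eval_mul, Polynomial.eval_one, Polynomial.eval_sub, Polynomial.eval_pow,
      Polynomial.eval_X, eval_map_conj]
    rw [Complex.conj_ofReal]
    rw [← Complex.mul_conj] at hc
    rw [← Complex.mul_conj] at hc
    linear_combination hc
  have hzero : R = 0 := by
    apply Polynomial.eq_zero_of_infinite_isRoot
    have : Set.Infinite ((fun x : ℝ => (x : ℂ)) '' Set.Icc (-1) 1) := by
      apply Set.Infinite.image
      · intro a _ b _ hab; exact Complex.ofReal_injective hab
      · exact Set.Icc_infinite (show (-1:ℝ) < 1 by norm_num)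
    apply this.mono
    rintro z ⟨x, hx, rfl⟩
    exact hroot x hx
  exact sub_eq_zero.mp hzero

lemma coeff_top (n : ℕ) (P Q : Polynomial ℂ)
    (hP : P.degree ≤ ((n+1 : ℕ) : WithBot ℕ)) (hQ : Q.degree ≤ ((n : ℕ) : WithBot ℕ))
    (E : P * P.map (starRingEnd ℂ) + (1 - Polynomial.X ^ 2) * (Q * Q.map (starRingEnd ℂ)) = 1) :
    P.coeff (n+1) * (starRingEnd ℂ) (P.coeff (n+1)) = Q.coeff n * (starRingEnd ℂ) (Q.coeff n) := by
  have hPn : P.natDegree ≤ n+1 := Polynomial.natDegree_le_iff_degree_le.mpr hP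
  have hQn : Q.natDegree ≤ n := Polynomial.natDegree_le_iff_degree_le.mpr hQ
  have hPc : (P.map (starRingEnd ℂ)).natDegree ≤ n+1 :=
    le_trans Polynomial.natDegree_map_le hPn
  have hQc : (Q.map (starRingEnd ℂ)).natDegree ≤ n :=
    le_trans Polynomial.natDegree_map_le hQn
  have h1 : (P * P.map (starRingEnd ℂ)).coeff ((n+1)+(n+1)) =
      P.coeff (n+1) * (P.map (starRingEnd ℂ)).coeff (n+1) :=
    Polynomial.coeff_mul_add_eq_of_natDegree_le hPn hPc
  have h2 : (Q * Q.map (starRingEnd ℂ)).coeff (n+n) =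
      Q.coeff n * (Q.map (starRingEnd ℂ)).coeff n :=
    Polynomial.coeff_mul_add_eq_of_natDegree_le hQn hQc
  have h3 : (Q * Q.map (starRingEnd ℂ)).coeff ((n+1)+(n+1)) = 0 := by
    apply Polynomial.coeff_eq_zero_of_natDegree_lt
    calc (Q * Q.map (starRingEnd ℂ)).natDegree ≤ _ := Polynomial.natDegree_mul_le
    _ < (n+1)+(n+1) := by omega
  have hE := congrArg (fun R => Polynomial.coeff R ((n+1)+(n+1))) E
  rw [sub_mul, one_mul] at hE
  simp only [Polynomial.coeff_add, Polynomial.coeff_sub, Polynomial.coeff_one] at hE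
  rw [h1, h3] at hE
  have h4 : (Polynomial.X ^ 2 * (Q * Q.map (starRingEnd ℂ))).coeff ((n+1)+(n+1)) =
      (Q * Q.map (starRingEnd ℂ)).coeff (n+n) := by
    have : (n+1)+(n+1) = (n+n) + 2 := by ring
    rw [this, Polynomial.coeff_X_pow_mul]
  rw [h4, h2] at hE
  simp only [Polynomial.coeff_map] at h1 h2 hE ⊢
  have : (n+1)+(n+1) ≠ 0 := by omega
  simp [this] at hE
  linear_combination hE

lemma exp_I_mul_real (t : ℝ) :
    Complex.exp (Complex.I * (t : ℂ)) = (Real.cos t : ℂ) + (Real.sin t : ℂ) * Complex.I := by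
  rw [mul_comm, Complex.exp_mul_I, Complex.ofReal_cos, Complex.ofReal_sin]

lemma exp_I_pi_div_two : Complex.exp (Complex.I * ((Real.pi/2 : ℝ) : ℂ)) = Complex.I := by
  rw [exp_I_mul_real]; simp

lemma exp_neg_I_pi_div_two :
    Complex.exp (-(Complex.I * ((Real.pi/2 : ℝ) : ℂ))) = -Complex.I := by
  have : -(Complex.I * ((Real.pi/2 : ℝ) : ℂ)) = Complex.I * ((-(Real.pi/2) : ℝ) : ℂ) := by
    push_cast; ring
  rw [this, exp_I_mul_real]; simp

lemma conj_exp_I (φ : ℝ) :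
    (starRingEnd ℂ) (Complex.exp (Complex.I * (φ : ℂ))) =
      Complex.exp (-(Complex.I * (φ : ℂ))) := by
  rw [← Complex.exp_conj]
  congr 1
  simp [Complex.conj_I]

lemma WZWZ (x : ℝ) (hs : ((Real.sqrt (1 - x ^ 2) : ℝ) : ℂ) ^ 2 = 1 - (x : ℂ) ^ 2) :
    Wosc x * Zrot (Real.pi/2) * (Wosc x * Zrot (-(Real.pi/2))) = 1 := by
  have h1 : Complex.exp (Complex.I * ((-(Real.pi/2) : ℝ) : ℂ)) = -Complex.I := by
    rw [exp_I_mul_real]; simp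
  have h2 : Complex.exp (-(Complex.I * ((-(Real.pi/2) : ℝ) : ℂ))) = Complex.I := by
    have : -(Complex.I * ((-(Real.pi/2) : ℝ) : ℂ)) = Complex.I * ((Real.pi/2 : ℝ) : ℂ) := by
      push_cast; ring
    rw [this, exp_I_pi_div_two]
  unfold Wosc Zrot
  rw [exp_I_pi_div_two, exp_neg_I_pi_div_two, h1, h2]
  set s := ((Real.sqrt (1 - x ^ 2) : ℝ) : ℂ)
  rw [Matrix.mul_fin_two, Matrix.mul_fin_two, Matrix.mul_fin_two, Matrix.one_fin_two]
  ext i j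
  fin_cases i <;> fin_cases j <;>
    simp [Matrix.cons_val_zero, Matrix.cons_val_one] <;>
    first
      | ring1
      | linear_combination (Complex.I^2 - 1 - (x:ℂ)^2*Complex.I^2) * Complex.I_sq +
          (Complex.I^2)^2 * hs

lemma step_matrix (φ x : ℝ) (a b ab bb : ℂ)
    (hs : ((Real.sqrt (1 - x ^ 2) : ℝ) : ℂ) ^ 2 = 1 - (x:ℂ) ^ 2) :
    (!![Complex.exp (-(Complex.I * (φ:ℂ))) * ((x:ℂ) * a) +
          Complex.exp (Complex.I * (φ:ℂ)) * ((1 - (x:ℂ)^2) * b),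
        Complex.I * (Real.sqrt (1 - x ^ 2) : ℂ) *
          (Complex.exp (Complex.I * (φ:ℂ)) * ((x:ℂ) * b) -
            Complex.exp (-(Complex.I * (φ:ℂ))) * a);
        Complex.I * (Real.sqrt (1 - x ^ 2) : ℂ) *
          (Complex.exp (-(Complex.I * (φ:ℂ))) * ((x:ℂ) * bb) -
            Complex.exp (Complex.I * (φ:ℂ)) * ab),
        Complex.exp (Complex.I * (φ:ℂ)) * ((x:ℂ) * ab) +
          Complex.exp (-(Complex.I * (φ:ℂ))) * ((1 - (x:ℂ)^2) * bb)] :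
      Matrix (Fin 2) (Fin 2) ℂ) * (Wosc x * Zrot φ) =
    !![a, Complex.I * (Real.sqrt (1 - x ^ 2) : ℂ) * b;
       Complex.I * (Real.sqrt (1 - x ^ 2) : ℂ) * bb, ab] := by
  have hcc : Complex.exp (Complex.I * (φ:ℂ)) * Complex.exp (-(Complex.I * (φ:ℂ))) = 1 := by
    rw [← Complex.exp_add]; simp
  unfold Wosc Zrot
  set s := ((Real.sqrt (1 - x ^ 2) : ℝ) : ℂ)
  set c := Complex.exp (Complex.I * (φ:ℂ))
  set c' := Complex.exp (-(Complex.I * (φ:ℂ)))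
  rw [Matrix.mul_fin_two, Matrix.mul_fin_two]
  ext i j
  fin_cases i <;> fin_cases j <;> simp
  · linear_combination a * hcc + (c*c'*a - c^2*(x:ℂ)*b) * hs +
      (s^2*((x:ℂ)*c^2*b - c*c'*a)) * Complex.I_sq
  · linear_combination (Complex.I*s*b) * hcc
  · linear_combination (Complex.I*s*bb) * hcc
  · linear_combination ab * hcc + (c*c'*ab - c'^2*(x:ℂ)*bb) * hs +
      (s^2*(c'^2*(x:ℂ)*bb - c*c'*ab)) * Complex.I_sq

lemma degree_le_nat (P : Polynomial ℂ) (n : ℕ) (h : ∀ k, n < k → P.coeff k = 0) :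
    P.degree ≤ (n : WithBot ℕ) := by
  rw [Polynomial.degree_le_iff_coeff_zero]
  intro m hm
  exact h m (by exact_mod_cast hm)

lemma coeff_zero_of_deg (P : Polynomial ℂ) (m k : ℕ) (h : P.degree ≤ (m : WithBot ℕ))
    (hk : m < k) : P.coeff k = 0 :=
  Polynomial.coeff_eq_zero_of_degree_lt (lt_of_le_of_lt h (by exact_mod_cast hk))

theorem qsp_key (d : ℕ) : ∀ P Q : Polynomial ℂ,
    P.degree ≤ (d : WithBot ℕ) →
    Q.degree ≤ ((d - 1 : ℕ) : WithBot ℕ) →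
    HasParity d P → HasParity (d - 1) Q →
    (∀ x ∈ Set.Icc (-1 : ℝ) 1,
      Complex.normSq (P.eval (x : ℂ)) +
        (1 - x ^ 2) * Complex.normSq (Q.eval (x : ℂ)) = 1) →
    ∃ Φ : Fin (d + 1) → ℝ,
      ∀ x ∈ Set.Icc (-1 : ℝ) 1,
        qspU Φ x =
          !![P.eval (x : ℂ),
             Complex.I * (Real.sqrt (1 - x ^ 2) : ℂ) * Q.eval (x : ℂ);
             Complex.I * (Real.sqrt (1 - x ^ 2) : ℂ) *
               (starRingEnd ℂ) (Q.eval (x : ℂ)),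
             (starRingEnd ℂ) (P.eval (x : ℂ))] := by
  induction d using Nat.strong_induction_on with
  | _ d IH =>
  cases d with
  | zero =>
    intro P Q hPdeg hQdeg hPpar hQpar hnorm
    have E := poly_norm_identity P Q hnorm
    have hPC : P = Polynomial.C (P.coeff 0) := by
      apply Polynomial.eq_C_of_degree_le_zero
      exact_mod_cast hPdeg
    set c := P.coeff 0 with hc
    have hcu : c * (starRingEnd ℂ) c = 1 := by
      have := congrArg (fun R => Polynomial.eval (1:ℂ) R) E
      simp only [Polynomial.eval_add, Polynomial.eval_mul, Polynomial.eval_sub,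
        Polynomial.eval_one, Polynomial.eval_pow, Polynomial.eval_X, eval_map_conj] at this
      rw [hPC] at this
      simp at this
      linear_combination this
    have hQ0 : Q = 0 := by
      have hPP : P * P.map (starRingEnd ℂ) = 1 := by
        rw [hPC]
        rw [Polynomial.map_C, ← Polynomial.C_mul, hcu, Polynomial.C_1]
      rw [hPP] at E
      have hzero : (1 - Polynomial.X ^ 2) * (Q * Q.map (starRingEnd ℂ)) = 0 := by
        linear_combination E
      have hX : (1 - Polynomial.X ^ 2 : Polynomial ℂ) ≠ 0 := by
        intro h
        have := congrArg (fun R => Polynomial.eval (0:ℂ) R) h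
        simp at this
      rcases mul_eq_zero.mp hzero with h | h
      · exact absurd h hX
      rcases mul_eq_zero.mp h with h' | h'
      · exact h'
      · exact (Polynomial.map_eq_zero_iff (RingHom.injective _)).mp h'
    refine ⟨fun _ => Complex.arg c, ?_⟩
    intro x hx
    have habs : ‖c‖ = 1 := by
      have : (Complex.normSq c : ℂ) = 1 := by rw [← Complex.mul_conj]; exact hcu
      have h2 : Complex.normSq c = 1 := by exact_mod_cast this
      rw [Complex.norm_def, h2, Real.sqrt_one]
    have hexp : Complex.exp (Complex.I * ((Complex.arg c : ℝ) : ℂ)) = c := by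
      rw [mul_comm]
      have := Complex.norm_mul_exp_arg_mul_I c
      rw [habs] at this
      simpa using this
    have hexp' : Complex.exp (-(Complex.I * ((Complex.arg c : ℝ) : ℂ))) = (starRingEnd ℂ) c := by
      rw [← conj_exp_I, hexp]
    unfold qspU Zrot
    simp only [List.ofFn_zero, List.prod_nil, mul_one]
    rw [hexp, hexp', hQ0, hPC]
    simp
  | succ n =>
    intro P Q hPdeg hQdeg hPpar hQpar hnorm
    simp only [Nat.add_sub_cancel] at hQdeg hQpar
    have E := poly_norm_identity P Q hnorm
    have htop := coeff_top n P Q hPdeg hQdeg E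
    set p := P.coeff (n+1) with hpdef
    set q := Q.coeff n with hqdef
    by_cases hp : p = 0
    · -- degenerate case
      have hq : q = 0 := by
        rw [hp] at htop
        have : (Complex.normSq q : ℂ) = 0 := by
          rw [← Complex.mul_conj, ← htop]; ring
        have h2 : Complex.normSq q = 0 := by exact_mod_cast this
        exact Complex.normSq_eq_zero.mp h2
      cases n with
      | zero =>
        exfalso
        have hP0 : P = 0 := by
          apply Polynomial.ext
          intro k
          simp only [Polynomial.coeff_zero]
          by_cases hk0 : k = 0
          · subst hk0; exact hPpar 0 (by omega)
          by_cases hk1 : k = 1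
          · subst hk1; exact hp
          · exact coeff_zero_of_deg P 1 k hPdeg (by omega)
        have h1 := hnorm 1 (by norm_num)
        rw [hP0] at h1
        norm_num at h1
      | succ m =>
        have h1 : P.degree ≤ (m : WithBot ℕ) := by
          apply degree_le_nat
          intro k hk
          by_cases hk1 : k = m+1
          · subst hk1; exact hPpar (m+1) (by omega)
          by_cases hk2 : k = m+2
          · subst hk2; exact hp
          · exact coeff_zero_of_deg P (m+2) k hPdeg (by omega)
        have h2 : Q.degree ≤ ((m - 1 : ℕ) : WithBot ℕ) := by
          apply degree_le_nat
          intro k hk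
          by_cases hk1 : k = m+1
          · subst hk1; exact hq
          by_cases hk2 : m+2 ≤ k
          · exact coeff_zero_of_deg Q (m+1) k hQdeg (by omega)
          · have hkm : k = m := by omega
            subst hkm; exact hQpar k (by omega)
        have h3 : HasParity m P := fun k hk => hPpar k (by omega)
        have h4 : HasParity (m-1) Q := by
          intro k hk
          rcases Nat.eq_zero_or_pos m with hm | hm
          · subst hm
            by_cases hk1 : k = 1
            · subst hk1; exact hq
            · exact coeff_zero_of_deg Q 1 k hQdeg (by omega)
          · exact hQpar k (by omega)
        obtain ⟨Φ'', hM⟩ := IH m (by omega) P Q h1 h2 h3 h4 hnorm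
        refine ⟨Fin.snoc (Fin.snoc Φ'' (Real.pi/2)) (-(Real.pi/2)), ?_⟩
        intro x hx
        rw [qspU_snoc, qspU_snoc, mul_assoc, WZWZ x (sqrt_sq_cast hx), mul_one]
        exact hM x hx
    · -- main case
      have hq : q ≠ 0 := by
        intro h0
        apply hp
        have : (Complex.normSq p : ℂ) = 0 := by
          rw [← Complex.mul_conj, htop, h0]; ring
        have h2 : Complex.normSq p = 0 := by exact_mod_cast this
        exact Complex.normSq_eq_zero.mp h2
      have habs : ‖p / q‖ = 1 := by
        have hnsq : Complex.normSq p = Complex.normSq q := by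
          have : (Complex.normSq p : ℂ) = (Complex.normSq q : ℂ) := by
            rw [← Complex.mul_conj, ← Complex.mul_conj]; exact htop
          exact_mod_cast this
        have : ‖p‖ = ‖q‖ := by
          rw [Complex.norm_def, Complex.norm_def, hnsq]
        rw [norm_div, this, div_self]
        simpa using hq
      set φ := Complex.arg (p / q) / 2 with hφdef
      set c := Complex.exp (Complex.I * (φ:ℂ)) with hcdef
      set c' := Complex.exp (-(Complex.I * (φ:ℂ))) with hc'def
      have hcc : c * c' = 1 := by
        rw [hcdef, hc'def, ← Complex.exp_add]; simp
      have hc2 : c ^ 2 = p / q := by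
        rw [hcdef, sq, ← Complex.exp_add]
        have harg : Complex.I * (φ:ℂ) + Complex.I * (φ:ℂ) =
            ((Complex.arg (p/q) : ℝ) : ℂ) * Complex.I := by
          rw [hφdef]; push_cast; ring
        rw [harg]
        have := Complex.norm_mul_exp_arg_mul_I (p / q)
        rw [habs] at this
        simpa using this
      have hpq : c' * p = c * q := by
        have hpc : p = c^2 * q := ((eq_div_iff hq).mp hc2).symm
        rw [hpc]
        linear_combination (c*q) * hcc
      -- the reduced pair (P', Q')
      set P' := Polynomial.C c' * (Polynomial.X * P) +
          Polynomial.C c * ((1 - Polynomial.X^2) * Q) with hP'def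
      set Q' := Polynomial.C c * (Polynomial.X * Q) - Polynomial.C c' * P with hQ'def
      have hXmul : ∀ (R : Polynomial ℂ) (m : ℕ),
          (Polynomial.X * R).coeff m = if 1 ≤ m then R.coeff (m-1) else 0 := by
        intro R m
        rw [mul_comm, show (R * Polynomial.X) = R * Polynomial.X^1 by ring,
          Polynomial.coeff_mul_X_pow']
      have hX2mul : ∀ (R : Polynomial ℂ) (m : ℕ),
          (Polynomial.X^2 * R).coeff m = if 2 ≤ m then R.coeff (m-2) else 0 := by
        intro R m
        rw [mul_comm, Polynomial.coeff_mul_X_pow']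
      have hP'c : ∀ m, P'.coeff m = c' * (if 1 ≤ m then P.coeff (m-1) else 0) +
          c * (Q.coeff m - (if 2 ≤ m then Q.coeff (m-2) else 0)) := by
        intro m
        rw [hP'def, sub_mul, one_mul]
        simp only [Polynomial.coeff_add, Polynomial.coeff_sub, Polynomial.coeff_C_mul,
          hXmul P m, hX2mul Q m]
      have hQ'c : ∀ m, Q'.coeff m = c * (if 1 ≤ m then Q.coeff (m-1) else 0) -
          c' * P.coeff m := by
        intro m
        rw [hQ'def]
        simp only [Polynomial.coeff_sub, Polynomial.coeff_C_mul, hXmul Q m]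
      have hP'par : HasParity n P' := by
        intro k hk
        rw [hP'c k]
        have hq1 : Q.coeff k = 0 := hQpar k (by omega)
        by_cases h2 : 2 ≤ k
        · rw [if_pos (by omega), if_pos h2, hPpar (k-1) (by omega),
            hQpar (k-2) (by omega), hq1]; ring
        · by_cases h1 : 1 ≤ k
          · rw [if_pos h1, if_neg h2, hPpar (k-1) (by omega), hq1]; ring
          · rw [if_neg h1, if_neg h2, hq1]; ring
      have hP'deg : P'.degree ≤ (n : WithBot ℕ) := by
        apply degree_le_nat
        intro k hk
        by_cases hpar : k % 2 = n % 2
        · have hk2 : n + 2 ≤ k := by omega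
          rw [hP'c k, if_pos (by omega), if_pos (by omega)]
          by_cases hke : k = n+2
          · subst hke
            have e1 : n+2-1 = n+1 := by omega
            have e2 : n+2-2 = n := by omega
            rw [e1, e2, coeff_zero_of_deg Q n (n+2) hQdeg (by omega)]
            linear_combination hpq
          · rw [coeff_zero_of_deg P (n+1) (k-1) hPdeg (by omega),
              coeff_zero_of_deg Q n k hQdeg (by omega),
              coeff_zero_of_deg Q n (k-2) hQdeg (by omega)]
            ring
        · exact hP'par k hpar
      have hQ'top : Q'.coeff (n+1) = 0 := by
        rw [hQ'c (n+1), if_pos (by omega)]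
        have e1 : n+1-1 = n := by omega
        rw [e1]
        linear_combination (-1 : ℂ) * hpq
      have hQ'parN : ∀ k, k % 2 ≠ (n+1) % 2 → Q'.coeff k = 0 := by
        intro k hk
        rw [hQ'c k]
        have hp1 : P.coeff k = 0 := hPpar k (by omega)
        by_cases h1 : 1 ≤ k
        · rw [if_pos h1, hQpar (k-1) (by omega), hp1]; ring
        · rw [if_neg h1, hp1]; ring
      have hQdegUse : ∀ k, n < k → Q.coeff k = 0 := fun k hk =>
        coeff_zero_of_deg Q n k hQdeg hk
      have hPdegUse : ∀ k, n + 1 < k → P.coeff k = 0 := fun k hk =>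
        coeff_zero_of_deg P (n+1) k hPdeg hk
      have hQ'deg : Q'.degree ≤ ((n - 1 : ℕ) : WithBot ℕ) := by
        apply degree_le_nat
        intro k hk
        by_cases hpar : k % 2 = (n+1) % 2
        · by_cases hke : k = n+1
          · subst hke; exact hQ'top
          · have hk3 : n + 3 ≤ k := by omega
            rw [hQ'c k, if_pos (by omega), hQdegUse (k-1) (by omega),
              hPdegUse k (by omega)]
            ring
        · exact hQ'parN k hpar
      have hQ'par : HasParity (n-1) Q' := by
        intro k hk
        rcases Nat.eq_zero_or_pos n with hn | hn
        · subst hn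
          by_cases hk1 : k = 1
          · subst hk1; simpa using hQ'top
          · rw [hQ'c k, if_pos (by omega), hQdegUse (k-1) (by omega),
              hPdegUse k (by omega)]
            ring
        · exact hQ'parN k (by omega)
      have hconjc : (starRingEnd ℂ) c = c' := conj_exp_I φ
      have hconjc' : (starRingEnd ℂ) c' = c := by
        rw [← hconjc, Complex.conj_conj]
      have ha' : ∀ x : ℝ, P'.eval (x:ℂ) =
          c' * ((x:ℂ) * P.eval (x:ℂ)) + c * ((1 - (x:ℂ)^2) * Q.eval (x:ℂ)) := by
        intro x
        rw [hP'def]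
        simp only [Polynomial.eval_add, Polynomial.eval_mul, Polynomial.eval_C,
          Polynomial.eval_sub, Polynomial.eval_pow, Polynomial.eval_X, Polynomial.eval_one]
      have hb' : ∀ x : ℝ, Q'.eval (x:ℂ) =
          c * ((x:ℂ) * Q.eval (x:ℂ)) - c' * P.eval (x:ℂ) := by
        intro x
        rw [hQ'def]
        simp only [Polynomial.eval_sub, Polynomial.eval_mul, Polynomial.eval_C,
          Polynomial.eval_X]
      have hca' : ∀ x : ℝ, (starRingEnd ℂ) (P'.eval (x:ℂ)) =
          c * ((x:ℂ) * (starRingEnd ℂ) (P.eval (x:ℂ))) +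
            c' * ((1 - (x:ℂ)^2) * (starRingEnd ℂ) (Q.eval (x:ℂ))) := by
        intro x
        rw [ha' x]
        simp only [map_add, _root_.map_mul, map_sub, _root_.map_one, map_pow, Complex.conj_ofReal,
          hconjc, hconjc']
      have hcb' : ∀ x : ℝ, (starRingEnd ℂ) (Q'.eval (x:ℂ)) =
          c' * ((x:ℂ) * (starRingEnd ℂ) (Q.eval (x:ℂ))) -
            c * (starRingEnd ℂ) (P.eval (x:ℂ)) := by
        intro x
        rw [hb' x]
        simp only [map_sub, _root_.map_mul, Complex.conj_ofReal, hconjc, hconjc']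
      have hnorm' : ∀ x ∈ Set.Icc (-1 : ℝ) 1,
          Complex.normSq (P'.eval (x : ℂ)) +
            (1 - x ^ 2) * Complex.normSq (Q'.eval (x : ℂ)) = 1 := by
        intro x hx
        have hkey : (P'.eval (x:ℂ)) * (starRingEnd ℂ) (P'.eval (x:ℂ)) +
            (1 - (x:ℂ)^2) * ((Q'.eval (x:ℂ)) * (starRingEnd ℂ) (Q'.eval (x:ℂ))) =
            (P.eval (x:ℂ)) * (starRingEnd ℂ) (P.eval (x:ℂ)) +
            (1 - (x:ℂ)^2) * ((Q.eval (x:ℂ)) * (starRingEnd ℂ) (Q.eval (x:ℂ))) := by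
          rw [hca' x, hcb' x, ha' x, hb' x]
          linear_combination ((P.eval (x:ℂ)) * (starRingEnd ℂ) (P.eval (x:ℂ)) +
            (1 - (x:ℂ)^2) * ((Q.eval (x:ℂ)) * (starRingEnd ℂ) (Q.eval (x:ℂ)))) * hcc
        rw [Complex.mul_conj, Complex.mul_conj, Complex.mul_conj, Complex.mul_conj] at hkey
        have h3 := congrArg (fun r : ℝ => (r:ℂ)) (hnorm x hx)
        push_cast at h3
        have h4 : ((Complex.normSq (P'.eval (x:ℂ)) +
            (1 - x^2) * Complex.normSq (Q'.eval (x:ℂ)) : ℝ) : ℂ) = ((1:ℝ):ℂ) := by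
          push_cast
          linear_combination hkey + h3
        exact_mod_cast h4
      obtain ⟨Φ', hM⟩ := IH n (by omega) P' Q' hP'deg hQ'deg hP'par hQ'par hnorm'
      refine ⟨Fin.snoc Φ' φ, ?_⟩
      intro x hx
      rw [qspU_snoc, hM x hx, hca' x, hcb' x, ha' x, hb' x]
      exact step_matrix φ x (P.eval (x:ℂ)) (Q.eval (x:ℂ))
        ((starRingEnd ℂ) (P.eval (x:ℂ))) ((starRingEnd ℂ) (Q.eval (x:ℂ)))
        (sqrt_sq_cast hx)


/-- converse direction of QSP: every pair of polynomials
`(P, Q)` with the stated degrees, parities and norm condition is realized by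
some QSP phase list. -/
theorem qsp_converse (d : ℕ) (hd : 1 ≤ d) (P Q : Polynomial ℂ)
    (hPdeg : P.degree ≤ (d : WithBot ℕ))
    (hQdeg : Q.degree ≤ ((d - 1 : ℕ) : WithBot ℕ))
    (hPpar : HasParity d P) (hQpar : HasParity (d - 1) Q)
    (hnorm : ∀ x ∈ Set.Icc (-1 : ℝ) 1,
      Complex.normSq (P.eval (x : ℂ)) +
        (1 - x ^ 2) * Complex.normSq (Q.eval (x : ℂ)) = 1) :
    ∃ Φ : Fin (d + 1) → ℝ,
      ∀ x ∈ Set.Icc (-1 : ℝ) 1,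
        qspU Φ x =
          !![P.eval (x : ℂ),
             Complex.I * (Real.sqrt (1 - x ^ 2) : ℂ) * Q.eval (x : ℂ);
             Complex.I * (Real.sqrt (1 - x ^ 2) : ℂ) *
               (starRingEnd ℂ) (Q.eval (x : ℂ)),
             (starRingEnd ℂ) (P.eval (x : ℂ))] :=
  qsp_key d P Q hPdeg hQdeg hPpar hQpar hnorm
end
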